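/- Let α : ℝ → ℝ² be twice differentiable on a nondegenerate interval I with α'(t)₁² − α'(t)₂² = 1 for all t ∈ I, and let r ∈ ℝ satisfy r²·(α''(t)₂² − α''(t)₁²) < 1 for all t ∈ I. Define β(t) := (α(t)₁ + r·α'(t)₂, α(t)₂ + r·α'(t)₁). Then for every t ∈ I there is a unique real λ with α''(t) = λ·(α'(t)₂, α'(t)₁); moreover β'(t) = (1 + r·λ)·α'(t), one has 1 + r·λ > 0, and β'(t) is timelike (β'(t)₁² > β'(t)₂²). -/

import Mathlib

private lemma hasDerivAt_fst {f : ℝ → ℝ × ℝ} {v : ℝ × ℝ} {x : ℝ}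
    (h : HasDerivAt f v x) : HasDerivAt (fun t => (f t).1) v.1 x :=
  (ContinuousLinearMap.fst ℝ ℝ ℝ).hasFDerivAt.comp_hasDerivAt x h

private lemma hasDerivAt_snd {f : ℝ → ℝ × ℝ} {v : ℝ × ℝ} {x : ℝ}
    (h : HasDerivAt f v x) : HasDerivAt (fun t => (f t).2) v.2 x :=
  (ContinuousLinearMap.snd ℝ ℝ ℝ).hasFDerivAt.comp_hasDerivAt x h

/-- The companion curve at constant Minkowski distance `r` from a
well-parametrized planar timelike curve is a timelike curve. -/
theorem minkowski_companion_curve (I : Set ℝ)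
    (hI : I.OrdConnected) (hI2 : ∃ x ∈ I, ∃ y ∈ I, x ≠ y)
    (α α' α'' : ℝ → ℝ × ℝ)
    (hα : ∀ t ∈ I, HasDerivAt α (α' t) t)
    (hα' : ∀ t ∈ I, HasDerivAt α' (α'' t) t)
    (hwp : ∀ t ∈ I, (α' t).1 ^ 2 - (α' t).2 ^ 2 = 1)
    (r : ℝ) (hr : ∀ t ∈ I, r ^ 2 * ((α'' t).2 ^ 2 - (α'' t).1 ^ 2) < 1)
    (β : ℝ → ℝ × ℝ)
    (hβ : β = fun t => ((α t).1 + r * (α' t).2, (α t).2 + r * (α' t).1)) :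
    ∀ t ∈ I,
      (∃! l : ℝ, (α'' t).1 = l * (α' t).2 ∧ (α'' t).2 = l * (α' t).1) ∧
      ∀ l : ℝ, ((α'' t).1 = l * (α' t).2 ∧ (α'' t).2 = l * (α' t).1) →
        HasDerivAt β ((1 + r * l) • α' t) t ∧ 0 < 1 + r * l ∧
        ((1 + r * l) * (α' t).2) ^ 2 < ((1 + r * l) * (α' t).1) ^ 2 := by
  have hconv : Convex ℝ I := hI.convex
  have hint : (interior I).Nonempty := by
    obtain ⟨x, hx, y, hy, hxy⟩ := hI2
    rcases hxy.lt_or_gt with h | h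
    · exact ⟨(x + y) / 2, interior_mono (hI.out hx hy) (by
        rw [interior_Icc]; exact ⟨by linarith, by linarith⟩)⟩
    · exact ⟨(y + x) / 2, interior_mono (hI.out hy hx) (by
        rw [interior_Icc]; exact ⟨by linarith, by linarith⟩)⟩
  intro t ht
  have hud : UniqueDiffWithinAt ℝ I t :=
    uniqueDiffWithinAt_convex hconv hint (subset_closure ht)
  -- derivative of the constant Minkowski norm
  have hkey : (α' t).1 * (α'' t).1 - (α' t).2 * (α'' t).2 = 0 := by
    have hf : HasDerivAt (fun s => (α' s).1 ^ 2 - (α' s).2 ^ 2)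
        (2 * (α' t).1 * (α'' t).1 - 2 * (α' t).2 * (α'' t).2) t := by
      have h1 := (hasDerivAt_fst (hα' t ht)).fun_pow 2
      have h2 := (hasDerivAt_snd (hα' t ht)).fun_pow 2
      simpa [mul_comm, mul_assoc, mul_left_comm] using h1.fun_sub h2
    have hcongr : HasDerivWithinAt (fun s => (α' s).1 ^ 2 - (α' s).2 ^ 2) 0 I t := by
      exact (hasDerivWithinAt_const t I (1 : ℝ)).congr (fun s hs => (hwp s hs)) (hwp t ht)
    have := hud.eq_deriv I hf.hasDerivWithinAt hcongr
    linarith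
  have hwpt := hwp t ht
  have h1pos : 0 < (α' t).1 ^ 2 := by nlinarith [sq_nonneg (α' t).2]
  have h1ne : (α' t).1 ≠ 0 := by intro h; rw [h] at h1pos; simp at h1pos
  set l : ℝ := (α'' t).2 / (α' t).1 with hl
  have hl2 : (α'' t).2 = l * (α' t).1 := by rw [hl, div_mul_cancel₀ _ h1ne]
  have hl1 : (α'' t).1 = l * (α' t).2 := by
    have : (α' t).1 * (α'' t).1 = (α' t).1 * (l * (α' t).2) := by
      rw [hl2] at hkey; ring_nf; ring_nf at hkey; nlinarith [hkey]
    exact mul_left_cancel₀ h1ne this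
  refine ⟨⟨l, ⟨hl1, hl2⟩, fun l' ⟨_, h2'⟩ => ?_⟩, ?_⟩
  · have : l' * (α' t).1 = l * (α' t).1 := by rw [← h2', hl2]
    exact mul_right_cancel₀ h1ne this
  intro m ⟨hm1, hm2⟩
  have hml : m = l := by
    have : m * (α' t).1 = l * (α' t).1 := by rw [← hm2, hl2]
    exact mul_right_cancel₀ h1ne this
  have hrm : 0 < 1 + r * m := by
    have hrt := hr t ht
    have : (α'' t).2 ^ 2 - (α'' t).1 ^ 2 = m ^ 2 := by
      rw [hm1, hm2]; ring_nf; nlinarith [hwpt]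
    rw [this] at hrt
    nlinarith [sq_nonneg (r * m), sq_nonneg (1 + r * m), sq_nonneg (1 - r * m)]
  refine ⟨?_, hrm, ?_⟩
  · have hb1 : HasDerivAt (fun s => (α s).1 + r * (α' s).2)
        ((α' t).1 + r * (α'' t).2) t :=
      (hasDerivAt_fst (hα t ht)).add ((hasDerivAt_snd (hα' t ht)).const_mul r)
    have hb2 : HasDerivAt (fun s => (α s).2 + r * (α' s).1)
        ((α' t).2 + r * (α'' t).1) t :=
      (hasDerivAt_snd (hα t ht)).add ((hasDerivAt_fst (hα' t ht)).const_mul r)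
    have := hb1.prodMk hb2
    rw [hβ]
    convert this using 1
    simp only [Prod.smul_mk, smul_eq_mul, Prod.mk.injEq, Prod.smul_def]
    constructor
    · rw [hm2]; ring
    · rw [hm1]; ring
  · nlinarith [sq_nonneg (1 + r * m)]
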